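/- If Z_i and Z_j are bounded real random variables such that E[Z_i^a Z_j^b] = E[Z_i^a] E[Z_j^b] for all natural numbers a, b ≥ 1, then Z_i and Z_j are independent. -/

import Mathlib

open MeasureTheory ProbabilityTheory

lemma aux_monoid_closure {K : Set (ℝ × ℝ)} (fK gK : C(K, ℝ))
    {x : C(K, ℝ)} (hx : x ∈ Submonoid.closure ({fK, gK} : Set C(K, ℝ))) :
    ∃ a b : ℕ, x = fK ^ a * gK ^ b := by
  induction hx using Submonoid.closure_induction with
  | mem y hy =>
    rcases hy with h | h
    · exact ⟨1, 0, by simp [h]⟩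
    · rw [Set.mem_singleton_iff] at h
      exact ⟨0, 1, by simp [h]⟩
  | one => exact ⟨0, 0, by simp⟩
  | mul y z _ _ hy hz =>
    obtain ⟨a, b, rfl⟩ := hy
    obtain ⟨c, d, rfl⟩ := hz
    exact ⟨a + c, b + d, by ring⟩

/-- Two probability measures on `ℝ × ℝ`, both supported in a compact box, that have
equal mixed moments, are equal. -/
lemma aux_ext {μ ν : Measure (ℝ × ℝ)} [IsProbabilityMeasure μ] [IsProbabilityMeasure ν]
    {M : ℝ}
    (hμK : μ (Set.Icc (-M) M ×ˢ Set.Icc (-M) M)ᶜ = 0)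
    (hνK : ν (Set.Icc (-M) M ×ˢ Set.Icc (-M) M)ᶜ = 0)
    (hmom : ∀ a b : ℕ, ∫ p : ℝ × ℝ, p.1 ^ a * p.2 ^ b ∂μ
      = ∫ p : ℝ × ℝ, p.1 ^ a * p.2 ^ b ∂ν) :
    μ = ν := by
  set K : Set (ℝ × ℝ) := Set.Icc (-M) M ×ˢ Set.Icc (-M) M with hKdef
  have hKc : IsCompact K := isCompact_Icc.prod isCompact_Icc
  have hKm : MeasurableSet K := measurableSet_Icc.prod measurableSet_Icc
  haveI : CompactSpace K := isCompact_iff_compactSpace.mp hKc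
  have he : MeasurableEmbedding ((↑) : K → ℝ × ℝ) := MeasurableEmbedding.subtype_coe hKm
  set μ' : Measure K := Measure.comap Subtype.val μ with hμ'def
  set ν' : Measure K := Measure.comap Subtype.val ν with hν'def
  have hmapμ : Measure.map Subtype.val μ' = μ := by
    rw [hμ'def, he.map_comap μ, Subtype.range_coe,
      Measure.restrict_eq_self_of_ae_mem]
    · exact (ae_iff).mpr (by exact hμK)
  have hmapν : Measure.map Subtype.val ν' = ν := by
    rw [hν'def, he.map_comap ν, Subtype.range_coe,
      Measure.restrict_eq_self_of_ae_mem]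
    · exact (ae_iff).mpr (by exact hνK)
  haveI : IsFiniteMeasure μ' := by
    constructor
    rw [hμ'def, he.comap_apply]
    exact (measure_mono (Set.subset_univ _)).trans_lt (measure_lt_top μ _)
  haveI : IsFiniteMeasure ν' := by
    constructor
    rw [hν'def, he.comap_apply]
    exact (measure_mono (Set.subset_univ _)).trans_lt (measure_lt_top ν _)
  -- transfer integrals of continuous functions on ℝ × ℝ to integrals over K
  have hintμ : ∀ g : ℝ × ℝ → ℝ, ∫ p, g p ∂μ = ∫ x : K, g x ∂μ' := by
    intro g
    conv_lhs => rw [← hmapμ]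
    exact he.integral_map (g := g)
  have hintν : ∀ g : ℝ × ℝ → ℝ, ∫ p, g p ∂ν = ∫ x : K, g x ∂ν' := by
    intro g
    conv_lhs => rw [← hmapν]
    exact he.integral_map (g := g)
  -- key: integrals of all continuous functions on K agree
  have key : ∀ f : C(K, ℝ), ∫ x, f x ∂μ' = ∫ x, f x ∂ν' := by
    set fK : C(K, ℝ) := ⟨fun p => (p : ℝ × ℝ).1, (continuous_fst.comp continuous_subtype_val)⟩
      with hfKdef
    set gK : C(K, ℝ) := ⟨fun p => (p : ℝ × ℝ).2, (continuous_snd.comp continuous_subtype_val)⟩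
      with hgKdef
    set A : Subalgebra ℝ C(K, ℝ) := Algebra.adjoin ℝ {fK, gK} with hAdef
    have hsep : A.SeparatesPoints := by
      intro x y hxy
      have hne : (x : ℝ × ℝ).1 ≠ (y : ℝ × ℝ).1 ∨ (x : ℝ × ℝ).2 ≠ (y : ℝ × ℝ).2 := by
        by_contra h
        push_neg at h
        exact hxy (Subtype.ext (Prod.ext h.1 h.2))
      rcases hne with h | h
      · exact ⟨fK, ⟨fK, Algebra.subset_adjoin (by simp), rfl⟩, h⟩
      · exact ⟨gK, ⟨gK, Algebra.subset_adjoin (by simp), rfl⟩, h⟩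
    -- continuity of the integration functionals
    have hcont : ∀ (m : Measure K) [IsFiniteMeasure m],
        Continuous fun f : C(K, ℝ) => ∫ x, f x ∂m := by
      intro m _
      have hlip : LipschitzWith (m Set.univ).toNNReal (fun f : C(K, ℝ) => ∫ x, f x ∂m) := by
        apply LipschitzWith.of_dist_le_mul
        intro f g
        rw [dist_eq_norm, dist_eq_norm]
        have hfint : Integrable (⇑f) m := (BoundedContinuousFunction.mkOfCompact f).integrable m
        have hgint : Integrable (⇑g) m := (BoundedContinuousFunction.mkOfCompact g).integrable m
        have : ∫ x, f x ∂m - ∫ x, g x ∂m = ∫ x, (BoundedContinuousFunction.mkOfCompact (f - g)) x ∂m := by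
          rw [← integral_sub hfint hgint]
          simp
        rw [this]
        calc ‖∫ x, (BoundedContinuousFunction.mkOfCompact (f - g)) x ∂m‖
            ≤ (m Set.univ).toReal * ‖BoundedContinuousFunction.mkOfCompact (f - g)‖ :=
              (BoundedContinuousFunction.mkOfCompact (f - g)).norm_integral_le_mul_norm m
          _ = ((m Set.univ).toNNReal : ℝ) * ‖f - g‖ := by
              rw [BoundedContinuousFunction.norm_mkOfCompact]
              rfl
      exact hlip.continuous
    -- the integrals agree on A
    have hA : ∀ f ∈ A, ∫ x, f x ∂μ' = ∫ x, f x ∂ν' := by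
      intro f hf
      have hf' : f ∈ Submodule.span ℝ ((Submonoid.closure ({fK, gK} : Set C(K, ℝ))) : Set C(K, ℝ)) := by
        have := Algebra.adjoin_eq_span (R := ℝ) (s := ({fK, gK} : Set C(K, ℝ)))
        rw [hAdef] at hf
        rw [← this]
        exact hf
      clear hf
      induction hf' using Submodule.span_induction with
      | mem x hx =>
        obtain ⟨a, b, rfl⟩ := aux_monoid_closure fK gK hx
        have hcoe : ∀ x : K, (fK ^ a * gK ^ b) x = (x : ℝ × ℝ).1 ^ a * (x : ℝ × ℝ).2 ^ b := by
          intro x; simp [hfKdef, hgKdef]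
        simp_rw [hcoe]
        rw [← hintμ (fun p => p.1 ^ a * p.2 ^ b), ← hintν (fun p => p.1 ^ a * p.2 ^ b)]
        exact hmom a b
      | zero => simp
      | add x y _ _ hx hy =>
        have h1 : Integrable (⇑x) μ' := (BoundedContinuousFunction.mkOfCompact x).integrable μ'
        have h2 : Integrable (⇑y) μ' := (BoundedContinuousFunction.mkOfCompact y).integrable μ'
        have h3 : Integrable (⇑x) ν' := (BoundedContinuousFunction.mkOfCompact x).integrable ν'
        have h4 : Integrable (⇑y) ν' := (BoundedContinuousFunction.mkOfCompact y).integrable ν'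
        have : ∀ z : K, (x + y) z = x z + y z := fun z => rfl
        simp_rw [this]
        rw [integral_add h1 h2, integral_add h3 h4, hx, hy]
      | smul c x _ hx =>
        have : ∀ z : K, (c • x) z = c • (x z) := fun z => rfl
        simp_rw [this]
        rw [integral_smul, integral_smul, hx]
    -- conclude by density
    intro f
    have hdense := ContinuousMap.subalgebra_topologicalClosure_eq_top_of_separatesPoints A hsep
    have hfmem : f ∈ closure (A : Set C(K, ℝ)) := by
      have : f ∈ (A.topologicalClosure : Set C(K, ℝ)) := by rw [hdense]; trivial
      exact this
    have hclosed : IsClosed {f : C(K, ℝ) | ∫ x, f x ∂μ' = ∫ x, f x ∂ν'} :=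
      isClosed_eq (hcont μ') (hcont ν')
    exact closure_minimal hA hclosed hfmem
  -- conclude measures equal
  apply ext_of_forall_lintegral_eq_of_IsFiniteMeasure
  intro f
  have h1 : ∫⁻ p, f p ∂μ ≠ ⊤ := (f.lintegral_lt_top_of_nnreal μ).ne
  have h2 : ∫⁻ p, f p ∂ν ≠ ⊤ := (f.lintegral_lt_top_of_nnreal ν).ne
  rw [← ENNReal.toReal_eq_toReal_iff' h1 h2,
    BoundedContinuousFunction.toReal_lintegral_coe_eq_integral,
    BoundedContinuousFunction.toReal_lintegral_coe_eq_integral]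
  rw [hintμ (fun p => (f p : ℝ)), hintν (fun p => (f p : ℝ))]
  exact key ⟨fun x : K => (f x : ℝ),
    (NNReal.continuous_coe.comp f.continuous).comp continuous_subtype_val⟩

/-- If `Zi` and `Zj` are bounded real random variables such that
`E[Zi^a * Zj^b] = E[Zi^a] * E[Zj^b]` for all naturals `a, b ≥ 1`,
then `Zi` and `Zj` are independent. -/
theorem stmt_0 {Ω : Type*} [MeasureSpace Ω] [IsProbabilityMeasure (ℙ : Measure Ω)]
    (Zi Zj : Ω → ℝ) (hZi : Measurable Zi) (hZj : Measurable Zj)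
    (M : ℝ) (hbi : ∀ᵐ ω ∂(ℙ : Measure Ω), |Zi ω| ≤ M)
    (hbj : ∀ᵐ ω ∂(ℙ : Measure Ω), |Zj ω| ≤ M)
    (hmom : ∀ a b : ℕ, 1 ≤ a → 1 ≤ b →
      ∫ ω, (Zi ω) ^ a * (Zj ω) ^ b ∂(ℙ : Measure Ω)
        = (∫ ω, (Zi ω) ^ a ∂(ℙ : Measure Ω)) * ∫ ω, (Zj ω) ^ b ∂(ℙ : Measure Ω)) :
    IndepFun Zi Zj ℙ := by
  have hZij : Measurable fun ω => (Zi ω, Zj ω) := hZi.prodMk hZj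
  rw [indepFun_iff_map_prod_eq_prod_map_map hZi.aemeasurable hZj.aemeasurable]
  set μ : Measure (ℝ × ℝ) := Measure.map (fun ω => (Zi ω, Zj ω)) ℙ with hμdef
  set ν : Measure (ℝ × ℝ) := (Measure.map Zi ℙ).prod (Measure.map Zj ℙ) with hνdef
  haveI : IsProbabilityMeasure (Measure.map Zi ℙ) :=
    Measure.isProbabilityMeasure_map hZi.aemeasurable
  haveI : IsProbabilityMeasure (Measure.map Zj ℙ) :=
    Measure.isProbabilityMeasure_map hZj.aemeasurable
  haveI : IsProbabilityMeasure μ := Measure.isProbabilityMeasure_map hZij.aemeasurable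
  haveI : IsProbabilityMeasure ν := by rw [hνdef]; infer_instance
  set K : Set (ℝ × ℝ) := Set.Icc (-M) M ×ˢ Set.Icc (-M) M with hKdef
  have hKm : MeasurableSet K := measurableSet_Icc.prod measurableSet_Icc
  have hIi : (Measure.map Zi ℙ) (Set.Icc (-M) M) = 1 := by
    rw [Measure.map_apply hZi measurableSet_Icc,
      ← prob_compl_eq_zero_iff (hZi measurableSet_Icc)]
    have hset : (Zi ⁻¹' Set.Icc (-M) M)ᶜ = {ω | ¬ |Zi ω| ≤ M} := by
      ext ω; simp [abs_le]
    rw [hset, ← ae_iff]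
    exact hbi
  have hIj : (Measure.map Zj ℙ) (Set.Icc (-M) M) = 1 := by
    rw [Measure.map_apply hZj measurableSet_Icc,
      ← prob_compl_eq_zero_iff (hZj measurableSet_Icc)]
    have hset : (Zj ⁻¹' Set.Icc (-M) M)ᶜ = {ω | ¬ |Zj ω| ≤ M} := by
      ext ω; simp [abs_le]
    rw [hset, ← ae_iff]
    exact hbj
  have hμK : μ Kᶜ = 0 := by
    rw [hμdef, Measure.map_apply hZij hKm.compl]
    have hset : ((fun ω => (Zi ω, Zj ω)) ⁻¹' Kᶜ)
        = {ω | ¬ (|Zi ω| ≤ M ∧ |Zj ω| ≤ M)} := by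
      ext ω
      simp only [Set.mem_preimage, Set.mem_compl_iff, hKdef, Set.mem_prod, Set.mem_Icc,
        abs_le, Set.mem_setOf_eq]
    rw [hset, ← ae_iff]
    filter_upwards [hbi, hbj] with ω h1 h2
    exact ⟨h1, h2⟩
  have hνK : ν Kᶜ = 0 := by
    rw [prob_compl_eq_zero_iff hKm, hνdef, hKdef, Measure.prod_prod, hIi, hIj, one_mul]
  -- mixed moments agree
  have hmm : ∀ a b : ℕ, ∫ p : ℝ × ℝ, p.1 ^ a * p.2 ^ b ∂μ
      = ∫ p : ℝ × ℝ, p.1 ^ a * p.2 ^ b ∂ν := by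
    intro a b
    have hasm : AEStronglyMeasurable (fun p : ℝ × ℝ => p.1 ^ a * p.2 ^ b) μ :=
      ((continuous_fst.pow a).mul (continuous_snd.pow b)).aestronglyMeasurable
    have hμside : ∫ p : ℝ × ℝ, p.1 ^ a * p.2 ^ b ∂μ
        = ∫ ω, (Zi ω) ^ a * (Zj ω) ^ b ∂(ℙ : Measure Ω) := by
      rw [hμdef]
      exact integral_map hZij.aemeasurable hasm
    have hνside : ∫ p : ℝ × ℝ, p.1 ^ a * p.2 ^ b ∂ν
        = (∫ ω, (Zi ω) ^ a ∂(ℙ : Measure Ω)) * ∫ ω, (Zj ω) ^ b ∂(ℙ : Measure Ω) := by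
      rw [hνdef]
      rw [integral_prod_mul (fun x : ℝ => x ^ a) (fun y : ℝ => y ^ b)]
      rw [integral_map hZi.aemeasurable (continuous_pow a).aestronglyMeasurable,
        integral_map hZj.aemeasurable (continuous_pow b).aestronglyMeasurable]
    rw [hμside, hνside]
    rcases Nat.eq_zero_or_pos a with ha | ha
    · subst ha
      simp
    rcases Nat.eq_zero_or_pos b with hb | hb
    · subst hb
      simp
    exact hmom a b ha hb
  exact aux_ext hμK hνK hmm
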